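/- A is T-EP if and only if A T* is EP and A = A T* T. -/
import Mathlib


open Matrix

/-- The four Penrose conditions: `X` is the Moore-Penrose inverse of `A`. -/
def IsMP {m n : ℕ} (A : Matrix (Fin m) (Fin n) ℂ) (X : Matrix (Fin n) (Fin m) ℂ) : Prop :=
  A * X * A = A ∧ X * A * X = X ∧ (A * X)ᴴ = A * X ∧ (X * A)ᴴ = X * A

/-- `A` is T-EP: range(A) = range(T Aᴴ T) and A = A Tᴴ T. -/
def IsTEP {m n : ℕ} (T A : Matrix (Fin m) (Fin n) ℂ) : Prop :=
  LinearMap.range (Matrix.mulVecLin A) = LinearMap.range (Matrix.mulVecLin (T * Aᴴ * T)) ∧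
    A = A * Tᴴ * T

section Aux

open scoped ComplexOrder

variable {a b c : ℕ}

private lemma range_mul_le' (N : Matrix (Fin a) (Fin b) ℂ) (C : Matrix (Fin b) (Fin c) ℂ) :
    LinearMap.range (N * C).mulVecLin ≤ LinearMap.range N.mulVecLin := by
  rw [Matrix.mulVecLin_mul]
  exact LinearMap.range_comp_le_range _ _

private lemma exists_factor' (M : Matrix (Fin a) (Fin b) ℂ) (N : Matrix (Fin a) (Fin c) ℂ)
    (h : LinearMap.range M.mulVecLin ≤ LinearMap.range N.mulVecLin) :
    ∃ C : Matrix (Fin c) (Fin b) ℂ, M = N * C := by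
  obtain ⟨hl, hh⟩ := Module.projective_lifting_property
    (N.mulVecLin.rangeRestrict)
    (M.mulVecLin.codRestrict _ (fun x => h (LinearMap.mem_range_self _ x)))
    N.mulVecLin.surjective_rangeRestrict
  refine ⟨LinearMap.toMatrix' hl, ?_⟩
  apply Matrix.toLin'.injective
  rw [Matrix.toLin'_apply', Matrix.toLin'_apply', Matrix.mulVecLin_mul]
  have : (LinearMap.toMatrix' hl).mulVecLin = hl := by
    rw [← Matrix.toLin'_apply', Matrix.toLin'_toMatrix']
  rw [this]
  have h2 := congrArg (fun g => (LinearMap.range N.mulVecLin).subtype ∘ₗ g) hh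
  simpa [← LinearMap.comp_assoc, LinearMap.subtype_comp_codRestrict] using h2.symm

private lemma exists_normal' (M : Matrix (Fin a) (Fin b) ℂ) :
    ∃ X : Matrix (Fin b) (Fin a) ℂ, Mᴴ * M * X = Mᴴ := by
  have h1 : LinearMap.range (Mᴴ * M).mulVecLin ≤ LinearMap.range Mᴴ.mulVecLin :=
    range_mul_le' _ _
  have h2 : (Mᴴ * M).rank = Mᴴ.rank := by
    rw [Matrix.rank_conjTranspose_mul_self, Matrix.rank_conjTranspose]
  unfold Matrix.rank at h2
  have heq := Submodule.eq_of_le_of_finrank_le h1 h2.ge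
  obtain ⟨X, hX⟩ := exists_factor' Mᴴ (Mᴴ * M) heq.symm.le
  exact ⟨X, hX.symm⟩

private lemma penrose_core' (M : Matrix (Fin a) (Fin b) ℂ) (X : Matrix (Fin b) (Fin a) ℂ)
    (h : Mᴴ * M * X = Mᴴ) :
    (M * X)ᴴ = M * X ∧ M * X * M = M ∧ (M * X) * (M * X) = M * X := by
  have hq0 : Mᴴ * (M * X) = Mᴴ := by rw [← Matrix.mul_assoc]; exact h
  have hq : (M * X)ᴴ * (M * X) = (M * X)ᴴ := by
    rw [conjTranspose_mul, Matrix.mul_assoc, hq0]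
  have hherm : (M * X)ᴴ = M * X := by
    have h2 := congrArg conjTranspose hq
    rw [conjTranspose_mul, conjTranspose_conjTranspose] at h2
    rw [hq] at h2
    exact h2
  have hMXM : M * X * M = M := by
    have h3 : (M * X * M)ᴴ = Mᴴ := by
      rw [conjTranspose_mul, hherm, ← Matrix.mul_assoc]
      exact h
    have h4 := congrArg conjTranspose h3
    rwa [conjTranspose_conjTranspose, conjTranspose_conjTranspose] at h4
  have hidem : (M * X) * (M * X) = M * X := by
    nth_rewrite 1 [← hherm]
    rw [hq, hherm]
  exact ⟨hherm, hMXM, hidem⟩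

private lemma herm_idem_eq' (P Q : Matrix (Fin a) (Fin a) ℂ)
    (hP : Pᴴ = P) (hQ : Qᴴ = Q) (hP2 : P * P = P) (hQ2 : Q * Q = Q)
    (hr : LinearMap.range P.mulVecLin = LinearMap.range Q.mulVecLin) : P = Q := by
  obtain ⟨C, hC⟩ := exists_factor' Q P hr.ge
  have hPQ : P * Q = Q := by rw [hC, ← Matrix.mul_assoc, hP2]
  obtain ⟨D, hD⟩ := exists_factor' P Q hr.le
  have hQP : Q * P = P := by rw [hD, ← Matrix.mul_assoc, hQ2]
  calc P = Pᴴ := hP.symm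
    _ = (Q * P)ᴴ := by rw [hQP]
    _ = Pᴴ * Qᴴ := by rw [conjTranspose_mul]
    _ = P * Q := by rw [hP, hQ]
    _ = Q := hPQ

/-- An EP matrix (range B = range Bᴴ) has a commuting Moore-Penrose inverse. -/
private lemma EP_mp (B : Matrix (Fin a) (Fin a) ℂ)
    (hEP : LinearMap.range B.mulVecLin = LinearMap.range Bᴴ.mulVecLin) :
    ∃ Bd : Matrix (Fin a) (Fin a) ℂ, IsMP B Bd ∧ B * Bd = Bd * B := by
  obtain ⟨X, hX⟩ := exists_normal' B
  obtain ⟨W, hW0⟩ := exists_normal' Bᴴ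
  obtain ⟨pb2, pb1, pb3⟩ := penrose_core' B X hX
  obtain ⟨pw2, pw1, pw3⟩ := penrose_core' Bᴴ W hW0
  have hZB : Wᴴ * B = Bᴴ * W := by
    rw [← pw2, conjTranspose_mul, conjTranspose_conjTranspose]
  have hBZB : B * Wᴴ * B = B := by
    have h' := congrArg conjTranspose pw1
    rwa [conjTranspose_mul, conjTranspose_mul, conjTranspose_conjTranspose,
      ← Matrix.mul_assoc] at h'
  have hBBd : B * (Wᴴ * B * X) = B * X := by
    calc B * (Wᴴ * B * X) = (B * Wᴴ * B) * X := by simp only [Matrix.mul_assoc]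
      _ = B * X := by rw [hBZB]
  have hBdB : (Wᴴ * B * X) * B = Wᴴ * B := by
    calc (Wᴴ * B * X) * B = Wᴴ * (B * X * B) := by simp only [Matrix.mul_assoc]
      _ = Wᴴ * B := by rw [pb1]
  have rBX : LinearMap.range (B * X).mulVecLin = LinearMap.range B.mulVecLin := by
    refine le_antisymm (range_mul_le' B X) ?_
    have h5 := range_mul_le' (B * X) B
    rwa [pb1] at h5
  have rZB : LinearMap.range (Bᴴ * W).mulVecLin = LinearMap.range Bᴴ.mulVecLin := by
    refine le_antisymm (range_mul_le' Bᴴ W) ?_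
    have h5 := range_mul_le' (Bᴴ * W) Bᴴ
    rwa [pw1] at h5
  have hcomm : B * X = Bᴴ * W := by
    refine herm_idem_eq' _ _ pb2 pw2 pb3 pw3 ?_
    rw [rBX, rZB, hEP]
  refine ⟨Wᴴ * B * X, ⟨?_, ?_, ?_, ?_⟩, ?_⟩
  · rw [hBBd, pb1]
  · calc (Wᴴ * B * X) * B * (Wᴴ * B * X) = Wᴴ * (B * X * B) * (Wᴴ * (B * X)) := by
          simp only [Matrix.mul_assoc]
      _ = (Wᴴ * B) * (Wᴴ * (B * X)) := by rw [pb1]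
      _ = (Wᴴ * (B * Wᴴ * B)) * X := by simp only [Matrix.mul_assoc]
      _ = Wᴴ * B * X := by rw [hBZB, Matrix.mul_assoc]
  · rw [hBBd, pb2]
  · rw [hBdB, hZB, pw2]
  · rw [hBBd, hBdB, hcomm, hZB]

/-- A matrix with a commuting Moore-Penrose inverse is EP. -/
private lemma mp_EP (B Bd : Matrix (Fin a) (Fin a) ℂ)
    (hmp : IsMP B Bd) (pc : B * Bd = Bd * B) :
    LinearMap.range B.mulVecLin = LinearMap.range Bᴴ.mulVecLin := by
  obtain ⟨p1, p2, p3, p4⟩ := hmp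
  have rBBd : LinearMap.range B.mulVecLin = LinearMap.range (B * Bd).mulVecLin := by
    refine le_antisymm ?_ (range_mul_le' B Bd)
    have h5 := range_mul_le' (B * Bd) B
    rwa [p1] at h5
  have rBdB : LinearMap.range Bᴴ.mulVecLin = LinearMap.range (Bd * B).mulVecLin := by
    refine le_antisymm ?_ ?_
    · have e : (Bd * B) * Bᴴ = Bᴴ := by
        have h' := congrArg conjTranspose p1
        rw [conjTranspose_mul, conjTranspose_mul, ← Matrix.mul_assoc] at h'
        rwa [show Bᴴ * Bdᴴ = Bd * B by rw [← conjTranspose_mul, p4]] at h'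
      have h5 := range_mul_le' (Bd * B) Bᴴ
      rwa [e] at h5
    · have e2 : Bd * B = Bᴴ * Bdᴴ := by rw [← conjTranspose_mul, p4]
      have h5 := range_mul_le' Bᴴ Bdᴴ
      rwa [← e2] at h5
  rw [rBBd, pc, ← rBdB]

end Aux

theorem stmt13 {m n : ℕ} (A T : Matrix (Fin m) (Fin n) ℂ)
    (hT : T = T * Tᴴ * T) :
    IsTEP T A ↔
      ((∃ Bd : Matrix (Fin m) (Fin m) ℂ,
          IsMP (A * Tᴴ) Bd ∧ A * Tᴴ * Bd = Bd * (A * Tᴴ)) ∧ A = A * Tᴴ * T) := by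
  have hTT : Tᴴ * T * Tᴴ = Tᴴ := by
    have h' := congrArg conjTranspose hT
    rw [conjTranspose_mul, conjTranspose_mul, conjTranspose_conjTranspose,
      ← Matrix.mul_assoc] at h'
    exact h'.symm
  have hBH : (A * Tᴴ)ᴴ = T * Aᴴ := by
    rw [conjTranspose_mul, conjTranspose_conjTranspose]
  constructor
  · rintro ⟨hr, hA⟩
    refine ⟨?_, hA⟩
    have rAB : LinearMap.range A.mulVecLin = LinearMap.range (A * Tᴴ).mulVecLin := by
      refine le_antisymm ?_ (range_mul_le' A Tᴴ)
      have h5 := range_mul_le' (A * Tᴴ) T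
      rwa [← hA] at h5
    have hle : LinearMap.range (A * Tᴴ).mulVecLin ≤ LinearMap.range (A * Tᴴ)ᴴ.mulVecLin := by
      rw [← rAB, hr, hBH]
      exact range_mul_le' (T * Aᴴ) T
    have hrank : (A * Tᴴ)ᴴ.rank = (A * Tᴴ).rank := by
      open scoped ComplexOrder in exact Matrix.rank_conjTranspose (A * Tᴴ)
    unfold Matrix.rank at hrank
    exact EP_mp (A * Tᴴ) (Submodule.eq_of_le_of_finrank_le hle hrank.le)
  · rintro ⟨⟨Bd, hmp, pc⟩, hA⟩
    refine ⟨?_, hA⟩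
    have hEP := mp_EP (A * Tᴴ) Bd hmp pc
    have rAB : LinearMap.range A.mulVecLin = LinearMap.range (A * Tᴴ).mulVecLin := by
      refine le_antisymm ?_ (range_mul_le' A Tᴴ)
      have h5 := range_mul_le' (A * Tᴴ) T
      rwa [← hA] at h5
    have rTA : LinearMap.range (T * Aᴴ).mulVecLin = LinearMap.range A.mulVecLin := by
      rw [← hBH, ← hEP, ← rAB]
    refine le_antisymm ?_ ?_
    · have hAT : LinearMap.range A.mulVecLin ≤ LinearMap.range T.mulVecLin := by
        rw [← rTA]
        exact range_mul_le' T Aᴴ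
      obtain ⟨C, hC⟩ := exists_factor' A T hAT
      have hATT : Aᴴ * T * Tᴴ = Aᴴ := by
        rw [hC, conjTranspose_mul]
        calc Cᴴ * Tᴴ * T * Tᴴ = Cᴴ * (Tᴴ * T * Tᴴ) := by simp only [Matrix.mul_assoc]
          _ = Cᴴ * Tᴴ := by rw [hTT]
      have e3 : (T * Aᴴ * T) * Tᴴ = T * Aᴴ := by
        calc (T * Aᴴ * T) * Tᴴ = T * (Aᴴ * T * Tᴴ) := by simp only [Matrix.mul_assoc]
          _ = T * Aᴴ := by rw [hATT]
      have h6 := range_mul_le' (T * Aᴴ * T) Tᴴ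
      rw [e3] at h6
      calc LinearMap.range A.mulVecLin = LinearMap.range (T * Aᴴ).mulVecLin := rTA.symm
        _ ≤ LinearMap.range (T * Aᴴ * T).mulVecLin := h6
    · calc LinearMap.range (T * Aᴴ * T).mulVecLin ≤ LinearMap.range (T * Aᴴ).mulVecLin :=
          range_mul_le' (T * Aᴴ) T
        _ = LinearMap.range A.mulVecLin := rTA
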